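/- Let A, B be differentiable functions on an open subset U of ℝ² with A never zero and B identically zero on U. Let ỹ : U → ℝ be differentiable with ∂_y ỹ never zero, and consider the coordinate change (x, y) ↦ (x, ỹ(x,y)). If the transformed components (Ã, B̃) are determined by the pseudocovector transformation rule of weight 1, i.e. (B̃, -Ã) = (det T)⁻²·T·(B, -A)ᵀ pointwise where T is the Jacobian matrix of the change with T₁₁ = 1, T₁₂ = 0, T₂₁ = ∂ₓỹ, T₂₂ = ∂_yỹ, then B̃ = 0 and Ã = A/(∂_y ỹ). In particular, choosing ỹ with ∂_y ỹ = A gives Ã = 1. -/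

import Mathlib

open Matrix

noncomputable def pdx (f : ℝ × ℝ → ℝ) (p : ℝ × ℝ) : ℝ := fderiv ℝ f p (1, 0)

noncomputable def pdy (f : ℝ × ℝ → ℝ) (p : ℝ × ℝ) : ℝ := fderiv ℝ f p (0, 1)

theorem stmt9 (U : Set (ℝ × ℝ)) (hU : IsOpen U)
    (A B At Bt yt : ℝ × ℝ → ℝ)
    (hA : Differentiable ℝ A) (hB : Differentiable ℝ B) (hyt : Differentiable ℝ yt)
    (hA0 : ∀ p ∈ U, A p ≠ 0) (hB0 : ∀ p ∈ U, B p = 0)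
    (hy0 : ∀ p ∈ U, pdy yt p ≠ 0)
    (T : ℝ × ℝ → Matrix (Fin 2) (Fin 2) ℝ)
    (hT : ∀ p, T p = !![1, 0; pdx yt p, pdy yt p])
    -- the pseudocovector transformation rule of weight 1:
    (htrans : ∀ p ∈ U,
      (fun i => ![Bt p, -At p] i) =
        fun i => ((T p).det)⁻¹^2 * ((T p).mulVec ![B p, -A p]) i) :
    (∀ p ∈ U, Bt p = 0 ∧ At p = A p / pdy yt p) ∧
    ((∀ p ∈ U, pdy yt p = A p) → ∀ p ∈ U, At p = 1) := by
  have key : ∀ p ∈ U, Bt p = 0 ∧ At p = A p / pdy yt p := by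
    intro p hp
    have h := htrans p hp
    have h0 := congrFun h 0
    have h1 := congrFun h 1
    simp only [hT, Matrix.det_fin_two_of, Matrix.mulVec, dotProduct,
      Matrix.cons_val', Matrix.cons_val_zero, Matrix.cons_val_one, Matrix.head_cons,
      Matrix.empty_val', Matrix.cons_val_fin_one, Matrix.head_fin_const,
      Fin.sum_univ_two, Matrix.of_apply] at h0 h1
    have hB' := hB0 p hp
    have hy' := hy0 p hp
    constructor
    · rw [h0, hB']; ring
    · have : -At p = ((1 * pdy yt p - 0 * pdx yt p)⁻¹) ^ 2 *
        (pdx yt p * B p + pdy yt p * (-A p)) := h1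
      rw [hB'] at this
      field_simp at this ⊢
      have e : At p * pdy yt p = A p := by
        have h2 : pdy yt p - 0 * pdx yt p = pdy yt p := by ring
        rw [h2, eq_div_iff (pow_ne_zero 2 hy')] at this
        exact mul_right_cancel₀ hy' (by linear_combination -this)
      linear_combination e
  refine ⟨key, fun hAy p hp => ?_⟩
  have := (key p hp).2
  rw [this, hAy p hp, div_self (hA0 p hp)]
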